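/- Let Q(x) = Σ_{k=1}^{n−1} a_k e^{2πikx} be a trigonometric polynomial with spectrum in [1, n−1], and set P = e^{2πinx} · Im Q(x). Then the n-th partial Fourier sum of P satisfies |S_n P(x)| = (1/2)|Q(x)| for every x. -/

import Mathlib

open Real Complex intervalIntegral

/-- The `m`-th Fourier coefficient of a 1-periodic function `f : ℝ → ℂ`. -/
noncomputable def fourierCoef (f : ℝ → ℂ) (m : ℤ) : ℂ :=
  ∫ t in (0:ℝ)..1, f t * Complex.exp (-2 * π * Complex.I * m * t)

/-- The `n`-th partial Fourier sum of a 1-periodic function `f : ℝ → ℂ`. -/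
noncomputable def partialFourierSum (n : ℕ) (f : ℝ → ℂ) (x : ℝ) : ℂ :=
  ∑ m ∈ Finset.Icc (-(n:ℤ)) (n:ℤ), fourierCoef f m * Complex.exp (2 * π * Complex.I * m * x)


lemma cont_exp (c : ℂ) : Continuous (fun t : ℝ => Complex.exp (c * t)) :=
  Complex.continuous_exp.comp (continuous_const.mul Complex.continuous_ofReal)

lemma int_exp (c : ℤ) : (∫ t in (0:ℝ)..1, Complex.exp (2*π*Complex.I*c*t)) = if c = 0 then 1 else 0 := by
  by_cases hc : c = 0
  · simp [hc]
  · have h0 : (2*(π:ℂ)*Complex.I*c) ≠ 0 := by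
      simp [Real.pi_ne_zero, Complex.I_ne_zero, Complex.ofReal_ne_zero, hc]
    have h := integral_exp_mul_complex (a := (0:ℝ)) (b := 1) h0
    simp only [mul_assoc] at h ⊢
    rw [h]
    rw [show (2*((π:ℂ)*(Complex.I*((c:ℂ)*((1:ℝ):ℂ))))) = (c:ℂ) * (2*π*Complex.I) by push_cast; ring]
    rw [Complex.exp_int_mul_two_pi_mul_I]
    simp [hc]

lemma coef_two_sum (s : Finset ℕ) (b c : ℕ → ℂ) (f g : ℕ → ℤ) (m : ℤ) :
    fourierCoef (fun x => ∑ k ∈ s,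
      (b k * Complex.exp (2*π*Complex.I*(f k)*x) + c k * Complex.exp (2*π*Complex.I*(g k)*x))) m
    = ∑ k ∈ s, (b k * (if m = f k then 1 else 0) + c k * (if m = g k then 1 else 0)) := by
  unfold fourierCoef
  have hint : ∀ (d : ℂ) (j : ℤ), IntervalIntegrable
      (fun t : ℝ => d * Complex.exp (2*π*Complex.I*j*t) * Complex.exp (-2*π*Complex.I*m*t))
      MeasureTheory.volume 0 1 := by
    intro d j
    apply Continuous.intervalIntegrable
    have h1 : Continuous (fun t : ℝ => Complex.exp ((2*π*Complex.I*j) * t)) := cont_exp _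
    have h2 : Continuous (fun t : ℝ => Complex.exp ((-2*π*Complex.I*m) * t)) := cont_exp _
    simp only [mul_assoc] at h1 h2 ⊢
    exact continuous_const.mul (h1.mul h2)
  have key : ∀ t : ℝ,
      (∑ k ∈ s, (b k * Complex.exp (2*π*Complex.I*(f k)*t) + c k * Complex.exp (2*π*Complex.I*(g k)*t)))
        * Complex.exp (-2*π*Complex.I*m*t)
      = ∑ k ∈ s, (b k * Complex.exp (2*π*Complex.I*(f k)*t) * Complex.exp (-2*π*Complex.I*m*t)
          + c k * Complex.exp (2*π*Complex.I*(g k)*t) * Complex.exp (-2*π*Complex.I*m*t)) := by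
    intro t
    rw [Finset.sum_mul]
    exact Finset.sum_congr rfl fun k _ => by ring
  simp only [key]
  rw [intervalIntegral.integral_finset_sum]
  · refine Finset.sum_congr rfl fun k _ => ?_
    rw [intervalIntegral.integral_add (hint _ _) (hint _ _)]
    have e1 : ∀ (d : ℂ) (j : ℤ),
        (∫ t in (0:ℝ)..1, d * Complex.exp (2*π*Complex.I*j*t) * Complex.exp (-2*π*Complex.I*m*t))
        = d * (if m = j then 1 else 0) := by
      intro d j
      simp only [mul_assoc]
      rw [intervalIntegral.integral_const_mul]
      have h3 : ∀ t : ℝ, Complex.exp (2*π*Complex.I*j*t) * Complex.exp (-2*π*Complex.I*m*t)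
          = Complex.exp (2*π*Complex.I*((j - m : ℤ):ℂ)*t) := by
        intro t
        rw [← Complex.exp_add]; congr 1; push_cast; ring
      simp only [mul_assoc] at h3
      simp only [h3]
      have h4 := int_exp (j - m)
      simp only [mul_assoc] at h4
      rw [h4]
      simp [sub_eq_zero, eq_comm]
    rw [e1, e1]
  · intro k _
    exact (hint _ _).add (hint _ _)

/-- For a trigonometric polynomial `Q(x) = Σ_{k=1}^{n-1} a_k e^{2πikx}` with spectrum in
`[1, n-1]` and `P(x) = e^{2πinx} · Im Q(x)`, one has `|S_n P(x)| = (1/2)|Q(x)|` for all `x`. -/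
theorem abs_partialFourierSum_modulated_im (n : ℕ) (hn : 1 ≤ n) (a : ℕ → ℂ)
    (Q P : ℝ → ℂ)
    (hQ : ∀ x : ℝ, Q x = ∑ k ∈ Finset.Icc 1 (n - 1), a k * Complex.exp (2 * π * Complex.I * k * x))
    (hP : ∀ x : ℝ, P x = Complex.exp (2 * π * Complex.I * n * x) * ((Q x).im : ℂ)) (x : ℝ) :
    ‖partialFourierSum n P x‖ = (1/2) * ‖Q x‖ := by
  set b : ℕ → ℂ := fun k => (2*Complex.I)⁻¹ * a k with hb
  set c : ℕ → ℂ := fun k => -(2*Complex.I)⁻¹ * (starRingEnd ℂ) (a k) with hc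
  set f : ℕ → ℤ := fun k => (n:ℤ) + k with hf
  set g : ℕ → ℤ := fun k => (n:ℤ) - k with hg
  have conj_exp : ∀ (k : ℕ) (y : ℝ),
      (starRingEnd ℂ) (Complex.exp (2*π*Complex.I*k*y)) = Complex.exp (-(2*π*Complex.I*k*y)) := by
    intro k y
    rw [← Complex.exp_conj]
    congr 1
    simp [Complex.conj_ofReal, map_ofNat]
  have hP2 : P = fun y : ℝ => ∑ k ∈ Finset.Icc 1 (n-1),
      (b k * Complex.exp (2*π*Complex.I*(f k)*(y:ℂ)) + c k * Complex.exp (2*π*Complex.I*(g k)*(y:ℂ))) := by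
    funext y
    rw [hP, hQ]
    have hz : ∀ z : ℂ, (z.im : ℂ) = (2*Complex.I)⁻¹ * (z - (starRingEnd ℂ) z) := by
      intro z
      rw [Complex.sub_conj]
      have hI : Complex.I ≠ 0 := Complex.I_ne_zero
      field_simp
      push_cast; ring
    rw [hz, map_sum, ← Finset.sum_sub_distrib, Finset.mul_sum, Finset.mul_sum]
    refine Finset.sum_congr rfl fun k hk => ?_
    rw [map_mul, conj_exp]
    have e1 : Complex.exp (2*π*Complex.I*n*y) * Complex.exp (2*π*Complex.I*k*y)
        = Complex.exp (2*π*Complex.I*((f k : ℤ):ℂ)*y) := by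
      rw [← Complex.exp_add]; congr 1; simp only [hf]; push_cast; ring
    have e3 : Complex.exp (2*π*Complex.I*n*y) * Complex.exp (-(2*π*Complex.I*k*y))
        = Complex.exp (2*π*Complex.I*((g k : ℤ):ℂ)*y) := by
      rw [← Complex.exp_add]; congr 1; simp only [hg]; push_cast; ring
    rw [← e1, ← e3]
    simp only [hb, hc]
    ring
  have coefP : ∀ m : ℤ, fourierCoef P m
      = ∑ k ∈ Finset.Icc 1 (n-1), (b k * (if m = f k then 1 else 0) + c k * (if m = g k then 1 else 0)) := by
    intro m
    rw [hP2]
    exact coef_two_sum _ b c f g m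
  have hS : partialFourierSum n P x
      = ∑ k ∈ Finset.Icc 1 (n-1), c k * Complex.exp (2*π*Complex.I*((g k : ℤ):ℂ)*x) := by
    unfold partialFourierSum
    simp only [coefP, Finset.sum_mul, add_mul]
    rw [Finset.sum_comm]
    refine Finset.sum_congr rfl fun k hk => ?_
    have hk' := Finset.mem_Icc.mp hk
    have hkf : f k ∉ Finset.Icc (-(n:ℤ)) (n:ℤ) := by
      simp only [hf, Finset.mem_Icc]
      have h1 : 1 ≤ k := hk'.1
      omega
    have hkg : g k ∈ Finset.Icc (-(n:ℤ)) (n:ℤ) := by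
      simp only [hg, Finset.mem_Icc]
      have h1 : 1 ≤ k := hk'.1
      have h2 : k ≤ n - 1 := hk'.2
      omega
    rw [Finset.sum_add_distrib]
    have s1 : (∑ m ∈ Finset.Icc (-(n:ℤ)) (n:ℤ),
        b k * (if m = f k then 1 else 0) * Complex.exp (2*π*Complex.I*(m:ℂ)*x)) = 0 := by
      refine Finset.sum_eq_zero fun m hm => ?_
      have : m ≠ f k := by rintro rfl; exact hkf hm
      simp [this]
    have s2 : (∑ m ∈ Finset.Icc (-(n:ℤ)) (n:ℤ),
        c k * (if m = g k then 1 else 0) * Complex.exp (2*π*Complex.I*(m:ℂ)*x))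
        = c k * Complex.exp (2*π*Complex.I*((g k : ℤ):ℂ)*x) := by
      rw [Finset.sum_eq_single (g k)]
      · simp
      · intro m _ hne; simp [hne]
      · intro h; exact absurd hkg h
    rw [s1, s2, zero_add]
  have hfin : partialFourierSum n P x
      = -(2*Complex.I)⁻¹ * (Complex.exp (2*π*Complex.I*n*x) * (starRingEnd ℂ) (Q x)) := by
    rw [hS, hQ, map_sum, Finset.mul_sum, Finset.mul_sum]
    refine Finset.sum_congr rfl fun k hk => ?_
    rw [map_mul, conj_exp]
    have e3 : Complex.exp (2*π*Complex.I*n*x) * Complex.exp (-(2*π*Complex.I*k*x))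
        = Complex.exp (2*π*Complex.I*((g k : ℤ):ℂ)*x) := by
      rw [← Complex.exp_add]; congr 1; simp only [hg]; push_cast; ring
    rw [← e3]
    simp only [hc]
    ring
  rw [hfin]
  have habs1 : ‖Complex.exp (2*π*Complex.I*n*x)‖ = 1 := by
    have h : (2*(π:ℂ)*Complex.I*n*x) = ((2*π*n*x : ℝ):ℂ) * Complex.I := by push_cast; ring
    rw [h, Complex.norm_exp_ofReal_mul_I]
  rw [norm_mul, norm_mul, Complex.norm_conj, habs1]
  simp [norm_inv, Complex.norm_I]
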